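/- Let A and P be real d×n matrices with σ = ‖A−P‖/√n, M a real d×k matrix with columns M_1,…,M_k, α ∈ (0,1), and δ ∈ (0,1/k] with δn a positive integer. Assume Well-Separatedness with parameter α, Spectrally Bounded Perturbations (σ/√δ ≤ α³·min_ℓ|M_ℓ|/(4500·k⁹)), and Proximate Latent Points: for every ℓ ∈ [k] there exists S_ℓ ⊆ {1,…,n} with |S_ℓ| = δn such that |P_{·,j} − M_ℓ| ≤ 4σ/√δ for all j ∈ S_ℓ. Then the k-th largest singular value of P satisfies s_k(P) ≥ 995·k^{8.5}·√n·σ/α². -/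

import Mathlib

noncomputable def col {d k : ℕ} (M : Matrix (Fin d) (Fin k) ℝ) (ℓ : Fin k) :
    EuclideanSpace ℝ (Fin d) := WithLp.toLp 2 (fun i => M i ℓ)

noncomputable def specNorm {d n : ℕ} (B : Matrix (Fin d) (Fin n) ℝ) : ℝ :=
  ‖LinearMap.toContinuousLinearMap (Matrix.toEuclideanLin B)‖

/-- The `t`-th largest singular value (1-indexed), via the Courant–Fischer
characterization. -/
noncomputable def singularValue {d n : ℕ} (B : Matrix (Fin d) (Fin n) ℝ) (t : ℕ) : ℝ :=
  ⨆ V : {V : Submodule ℝ (EuclideanSpace ℝ (Fin n)) // Module.finrank ℝ V = t},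
    ⨅ x : {x : EuclideanSpace ℝ (Fin n) // x ∈ V.1 ∧ ‖x‖ = 1},
      ‖Matrix.toEuclideanLin B x.1‖

/-- Norm of the component of `x` orthogonal to the span of the columns `M ℓ'`, `ℓ' ≠ ℓ`. -/
noncomputable def projNullNorm {d k : ℕ} (M : Matrix (Fin d) (Fin k) ℝ) (ℓ : Fin k)
    (x : EuclideanSpace ℝ (Fin d)) : ℝ :=
  ‖(Submodule.orthogonalProjectionOnto ((Submodule.span ℝ {y | ∃ ℓ' : Fin k, ℓ' ≠ ℓ ∧ y = col M ℓ'})ᗮ) x :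
      EuclideanSpace ℝ (Fin d))‖

/-! ### Auxiliary lemmas -/

lemma singularValue_nonneg {d n : ℕ} (B : Matrix (Fin d) (Fin n) ℝ) (t : ℕ) :
    0 ≤ singularValue B t := by
  apply Real.iSup_nonneg
  intro V
  exact Real.iInf_nonneg fun x => norm_nonneg _

lemma toEuclideanLin_single {d n : ℕ} (P : Matrix (Fin d) (Fin n) ℝ) (j : Fin n) :
    Matrix.toEuclideanLin P (EuclideanSpace.single j 1) = col P j := by
  ext i
  simp [Matrix.toEuclideanLin_apply, Matrix.mulVec, dotProduct,
    EuclideanSpace.single_apply, col]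

/-- projection contraction bound used twice -/
lemma projQ_le {d k : ℕ} (M : Matrix (Fin d) (Fin k) ℝ) (ℓ₀ : Fin k)
    (y : EuclideanSpace ℝ (Fin d))
    (hy : (Submodule.orthogonalProjectionOnto ((Submodule.span ℝ
        {y | ∃ ℓ' : Fin k, ℓ' ≠ ℓ₀ ∧ y = col M ℓ'})ᗮ) y :
        EuclideanSpace ℝ (Fin d)) =
      (Submodule.orthogonalProjectionOnto ((Submodule.span ℝ
        {y | ∃ ℓ' : Fin k, ℓ' ≠ ℓ₀ ∧ y = col M ℓ'})ᗮ) (col M ℓ₀) :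
        EuclideanSpace ℝ (Fin d))) :
    projNullNorm M ℓ₀ (col M ℓ₀) ≤ ‖y‖ := by
  set W := Submodule.span ℝ {y | ∃ ℓ' : Fin k, ℓ' ≠ ℓ₀ ∧ y = col M ℓ'}
  have h1 : projNullNorm M ℓ₀ (col M ℓ₀) =
      ‖(Submodule.orthogonalProjectionOnto Wᗮ y : EuclideanSpace ℝ (Fin d))‖ := by
    rw [hy]; rfl
  rw [h1]
  calc ‖(Submodule.orthogonalProjectionOnto Wᗮ y : EuclideanSpace ℝ (Fin d))‖
      ≤ ‖Submodule.orthogonalProjectionOnto Wᗮ‖ * ‖y‖ := (Submodule.orthogonalProjectionOnto Wᗮ).le_opNorm _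
    _ ≤ 1 * ‖y‖ := mul_le_mul_of_nonneg_right (Submodule.orthogonalProjectionOnto_norm_le _) (norm_nonneg _)
    _ = ‖y‖ := one_mul _

lemma colM_mem_W {d k : ℕ} (M : Matrix (Fin d) (Fin k) ℝ) {ℓ₀ ℓ : Fin k} (h : ℓ ≠ ℓ₀) :
    (Submodule.orthogonalProjectionOnto ((Submodule.span ℝ
        {y | ∃ ℓ' : Fin k, ℓ' ≠ ℓ₀ ∧ y = col M ℓ'})ᗮ) (col M ℓ)) = 0 := by
  apply Submodule.orthogonalProjectionOnto_apply_of_mem_orthogonal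
  exact Submodule.le_orthogonal_orthogonal _ (Submodule.subset_span ⟨ℓ, h, rfl⟩)

lemma proj_lower_bound {d k : ℕ} (M : Matrix (Fin d) (Fin k) ℝ) (c : Fin k → ℝ) (ℓ₀ : Fin k) :
    |c ℓ₀| * projNullNorm M ℓ₀ (col M ℓ₀) ≤ ‖∑ ℓ, c ℓ • col M ℓ‖ := by
  set W := Submodule.span ℝ {y | ∃ ℓ' : Fin k, ℓ' ≠ ℓ₀ ∧ y = col M ℓ'} with hW
  set Q := Submodule.orthogonalProjectionOnto Wᗮ with hQ
  have hQsum : Q (∑ ℓ, c ℓ • col M ℓ) = c ℓ₀ • Q (col M ℓ₀) := by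
    rw [map_sum, Finset.sum_eq_single ℓ₀]
    · rw [map_smul]
    · intro ℓ _ hℓ; rw [map_smul, colM_mem_W M hℓ, smul_zero]
    · intro h; exact absurd (Finset.mem_univ ℓ₀) h
  calc |c ℓ₀| * projNullNorm M ℓ₀ (col M ℓ₀)
      = ‖(Q (∑ ℓ, c ℓ • col M ℓ) : EuclideanSpace ℝ (Fin d))‖ := by
        rw [hQsum]
        push_cast
        rw [norm_smul, Real.norm_eq_abs]
        rfl
    _ ≤ ‖Q‖ * ‖∑ ℓ, c ℓ • col M ℓ‖ := Q.le_opNorm _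
    _ ≤ 1 * ‖∑ ℓ, c ℓ • col M ℓ‖ :=
        mul_le_mul_of_nonneg_right (Submodule.orthogonalProjectionOnto_norm_le _) (norm_nonneg _)
    _ = _ := one_mul _

lemma orthonormal_indicators {n k : ℕ} (m : ℕ) (hm0 : 0 < m) (S : Fin k → Finset (Fin n))
    (hcard : ∀ ℓ, (S ℓ).card = m)
    (hdisj : ∀ ℓ ℓ', ℓ ≠ ℓ' → Disjoint (S ℓ) (S ℓ')) :
    Orthonormal ℝ (fun ℓ => (Real.sqrt m)⁻¹ •
      ∑ j ∈ S ℓ, EuclideanSpace.single j (1:ℝ)) := by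
  have hm : (0:ℝ) < Real.sqrt m := Real.sqrt_pos.2 (by exact_mod_cast hm0)
  rw [orthonormal_iff_ite]
  intro ℓ ℓ'
  rw [real_inner_smul_left, real_inner_smul_right, sum_inner]
  simp_rw [inner_sum, EuclideanSpace.inner_single_left, map_one, one_mul,
    EuclideanSpace.single_apply, Finset.sum_ite_eq]
  by_cases h : ℓ = ℓ'
  · subst h
    simp only [if_pos rfl]
    rw [Finset.sum_congr rfl (fun j hj => if_pos hj), Finset.sum_const, hcard]
    rw [nsmul_eq_mul, mul_one]
    field_simp
    rw [if_pos trivial, mul_one, Real.sq_sqrt (Nat.cast_nonneg _)]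
  · simp only [if_neg h]
    have : ∀ j ∈ S ℓ, (if j ∈ S ℓ' then (1:ℝ) else 0) = 0 := fun j hj =>
      if_neg (fun hj' => Finset.disjoint_left.mp (hdisj ℓ ℓ' h) hj hj')
    rw [Finset.sum_congr rfl this, Finset.sum_const]
    simp

set_option maxHeartbeats 1000000 in
theorem stmt7 {d n k : ℕ} (hk : 1 ≤ k)
    (A P : Matrix (Fin d) (Fin n) ℝ) (M : Matrix (Fin d) (Fin k) ℝ)
    (σ : ℝ) (hσ : σ = specNorm (A - P) / Real.sqrt n)
    (α δ : ℝ) (hα : α ∈ Set.Ioo (0:ℝ) 1) (hδ0 : 0 < δ) (hδk : δ ≤ 1 / k)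
    (m : ℕ) (hm0 : 0 < m) (hm : (m : ℝ) = δ * n)
    (hWS : ∀ ℓ : Fin k, α * (⨆ ℓ' : Fin k, ‖col M ℓ'‖) ≤ projNullNorm M ℓ (col M ℓ))
    (hSB : σ / Real.sqrt δ ≤ α ^ 3 * (⨅ ℓ : Fin k, ‖col M ℓ‖) / (4500 * (k : ℝ) ^ 9))
    (hProx : ∀ ℓ : Fin k, ∃ S : Finset (Fin n), S.card = m ∧
      ∀ j ∈ S, ‖col P j - col M ℓ‖ ≤ 4 * σ / Real.sqrt δ) :
    995 * (k : ℝ) ^ (8.5 : ℝ) * Real.sqrt n * σ / α ^ 2 ≤ singularValue P k := by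
  obtain ⟨hα0, hα1⟩ := hα
  have hσ0 : 0 ≤ σ := hσ ▸ div_nonneg (norm_nonneg _) (Real.sqrt_nonneg _)
  rcases eq_or_lt_of_le hσ0 with hσz | hσpos
  · have h0 : 995 * (k:ℝ) ^ (8.5:ℝ) * Real.sqrt n * σ / α ^ 2 = 0 := by
      rw [← hσz]; ring
    rw [h0]; exact singularValue_nonneg P k
  clear hσ hσ0 A
  -- notation
  have hkpos : 0 < k := hk
  haveI : Nonempty (Fin k) := ⟨⟨0, hkpos⟩⟩
  set K : ℝ := (k : ℝ) with hKdef
  have hK1 : (1:ℝ) ≤ K := by rw [hKdef]; exact_mod_cast hk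
  have hK0 : (0:ℝ) < K := lt_of_lt_of_le one_pos hK1
  set sδ := Real.sqrt δ with hsδdef
  have hsδ0 : 0 < sδ := Real.sqrt_pos.2 hδ0
  set minM := ⨅ ℓ : Fin k, ‖col M ℓ‖ with hmindef
  set supM := ⨆ ℓ : Fin k, ‖col M ℓ‖ with hsupdef
  have hmin_le : ∀ ℓ, minM ≤ ‖col M ℓ‖ := fun ℓ =>
    ciInf_le (f := fun ℓ' => ‖col M ℓ'‖) (Set.Finite.bddBelow (Set.finite_range _)) ℓ
  have hle_sup : ∀ ℓ, ‖col M ℓ‖ ≤ supM := fun ℓ =>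
    le_ciSup (f := fun ℓ' => ‖col M ℓ'‖) (Set.Finite.bddAbove (Set.finite_range _)) ℓ
  have hmin_sup : minM ≤ supM := (hmin_le ⟨0, hkpos⟩).trans (hle_sup ⟨0, hkpos⟩)
  clear_value K sδ minM supM
  have hK9 : (1:ℝ) ≤ K ^ 9 := one_le_pow₀ hK1
  have hs : 0 < σ / sδ := div_pos hσpos hsδ0
  have hSB' : σ / sδ * (4500 * K ^ 9) ≤ α ^ 3 * minM := by
    rw [← le_div_iff₀ (by positivity)]; exact hSB
  have hmin_pos : 0 < minM := by
    by_contra hc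
    push_neg at hc
    nlinarith [pow_pos hα0 3]
  -- separation of the columns
  have hsep : ∀ ℓ ℓ' : Fin k, ℓ ≠ ℓ' → α * minM ≤ ‖col M ℓ - col M ℓ'‖ := by
    intro ℓ ℓ' hne
    have h1 : α * minM ≤ projNullNorm M ℓ (col M ℓ) :=
      le_trans (by nlinarith) (hWS ℓ)
    refine h1.trans (projQ_le M ℓ _ ?_)
    rw [map_sub, colM_mem_W M (Ne.symm hne)]
    push_cast
    rw [sub_zero]
  -- choose the index sets
  choose S hScard hSdist using hProx
  have hdisj : ∀ ℓ ℓ', ℓ ≠ ℓ' → Disjoint (S ℓ) (S ℓ') := by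
    intro ℓ ℓ' hne
    rw [Finset.disjoint_left]
    intro j hj hj'
    have h1 := hSdist ℓ j hj
    have h2 := hSdist ℓ' j hj'
    have h3 : ‖col M ℓ - col M ℓ'‖ ≤ 8 * σ / sδ := by
      calc ‖col M ℓ - col M ℓ'‖
          = ‖(col M ℓ - col P j) + (col P j - col M ℓ')‖ := by abel_nf
        _ ≤ ‖col M ℓ - col P j‖ + ‖col P j - col M ℓ'‖ := norm_add_le _ _
        _ = ‖col P j - col M ℓ‖ + ‖col P j - col M ℓ'‖ := by rw [norm_sub_rev]
        _ ≤ 4 * σ / sδ + 4 * σ / sδ := add_le_add h1 h2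
        _ = 8 * σ / sδ := by ring
    have h4 := (hsep ℓ ℓ' hne).trans h3
    rw [show (8:ℝ) * σ / sδ = 8 * (σ / sδ) by ring] at h4
    have hA : α ^ 3 ≤ α := by
      nlinarith [mul_nonneg (mul_nonneg (sub_nonneg.2 hα1.le)
        (by linarith : (0:ℝ) ≤ 1 + α)) hα0.le]
    have hA' : α ^ 3 * minM ≤ α * minM := mul_le_mul_of_nonneg_right hA hmin_pos.le
    have hB : σ / sδ * 4500 ≤ σ / sδ * (4500 * K ^ 9) :=
      mul_le_mul_of_nonneg_left (by nlinarith) hs.le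
    linarith
  -- the orthonormal family
  set u : Fin k → EuclideanSpace ℝ (Fin n) := fun ℓ => (Real.sqrt m)⁻¹ •
      ∑ j ∈ S ℓ, EuclideanSpace.single j (1:ℝ) with hudef
  have hu : Orthonormal ℝ u := orthonormal_indicators m hm0 S hScard hdisj
  set V₀ := Submodule.span ℝ (Set.range u) with hV₀def
  have hrank : Module.finrank ℝ V₀ = k := by
    rw [hV₀def, finrank_span_eq_card hu.linearIndependent, Fintype.card_fin]
  have hsm0 : (0:ℝ) < Real.sqrt m := Real.sqrt_pos.2 (by exact_mod_cast hm0)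
  have hsm : (Real.sqrt m)⁻¹ * (m:ℝ) = Real.sqrt m := by
    rw [inv_mul_eq_div, div_eq_iff hsm0.ne']
    exact (Real.mul_self_sqrt (Nat.cast_nonneg m)).symm
  set L := Matrix.toEuclideanLin P with hLdef
  have hLu : ∀ ℓ, L (u ℓ) = (Real.sqrt m)⁻¹ • ∑ j ∈ S ℓ, col P j := by
    intro ℓ
    rw [hudef]
    simp only
    rw [map_smul, map_sum]
    congr 1
    exact Finset.sum_congr rfl fun j _ => toEuclideanLin_single P j
  -- main lower bound on the subspace
  have hmain : ∀ x : EuclideanSpace ℝ (Fin n), x ∈ V₀ → ‖x‖ = 1 →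
      995 * K ^ (8.5:ℝ) * Real.sqrt n * σ / α ^ 2 ≤ ‖L x‖ := by
    intro x hxV hx1
    obtain ⟨c, hc⟩ := (Submodule.mem_span_range_iff_exists_fun ℝ).1 hxV
    have hsum : ∑ ℓ, (c ℓ) ^ 2 = 1 := by
      have h1 := hu.inner_sum c c Finset.univ
      rw [hc, real_inner_self_eq_norm_sq, hx1] at h1
      simpa [sq] using h1.symm
    have habs_le_one : ∀ ℓ, |c ℓ| ≤ 1 := by
      intro ℓ
      have h2 : c ℓ ^ 2 ≤ 1 := by
        rw [← hsum]
        exact Finset.single_le_sum (fun i _ => sq_nonneg (c i)) (Finset.mem_univ ℓ)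
      exact (sq_le_one_iff_abs_le_one (c ℓ)).1 h2
    obtain ⟨ℓs, -, hℓs⟩ := Finset.exists_le_of_sum_le (Finset.univ_nonempty)
      (show ∑ _ℓ : Fin k, 1/K ≤ ∑ ℓ, (c ℓ)^2 by
        rw [hsum, Finset.sum_const, Finset.card_univ, Fintype.card_fin,
          nsmul_eq_mul, ← hKdef, mul_one_div, div_self hK0.ne'])
    have hcs : 1 / Real.sqrt K ≤ |c ℓs| := by
      have h1 : Real.sqrt (1/K) ≤ Real.sqrt ((c ℓs)^2) := Real.sqrt_le_sqrt hℓs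
      rwa [Real.sqrt_sq_eq_abs, one_div, Real.sqrt_inv, ← one_div] at h1
    have hsK0 : 0 < Real.sqrt K := Real.sqrt_pos.2 hK0
    -- decompose L x
    set E : EuclideanSpace ℝ (Fin d) :=
      ∑ ℓ, c ℓ • ((Real.sqrt m)⁻¹ • ∑ j ∈ S ℓ, (col P j - col M ℓ)) with hEdef
    have hLx : L x = Real.sqrt m • (∑ ℓ, c ℓ • col M ℓ) + E := by
      calc L x = ∑ ℓ, c ℓ • L (u ℓ) := by
            rw [← hc, map_sum]; simp_rw [map_smul]
        _ = ∑ ℓ, c ℓ • ((Real.sqrt m)⁻¹ • ∑ j ∈ S ℓ, col P j) := by simp_rw [hLu]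
        _ = ∑ ℓ, (c ℓ • (Real.sqrt m • col M ℓ)
              + c ℓ • ((Real.sqrt m)⁻¹ • ∑ j ∈ S ℓ, (col P j - col M ℓ))) := by
            refine Finset.sum_congr rfl fun ℓ _ => ?_
            have hsplit : ∑ j ∈ S ℓ, col P j
                = (m:ℝ) • col M ℓ + ∑ j ∈ S ℓ, (col P j - col M ℓ) := by
              rw [Finset.sum_sub_distrib, Finset.sum_const, hScard ℓ,
                ← Nat.cast_smul_eq_nsmul ℝ]
              abel
            rw [hsplit, smul_add ((Real.sqrt (m:ℝ))⁻¹), smul_smul ((Real.sqrt (m:ℝ))⁻¹),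
              hsm, smul_add]
        _ = _ := by
            rw [Finset.sum_add_distrib, hEdef, Finset.smul_sum]
            simp_rw [smul_comm (Real.sqrt m) _]
    have hE : ‖E‖ ≤ K * (Real.sqrt m * (4 * σ / sδ)) := by
      rw [hEdef]
      refine (norm_sum_le _ _).trans ?_
      have hterm : ∀ ℓ ∈ Finset.univ,
          ‖c ℓ • ((Real.sqrt m)⁻¹ • ∑ j ∈ S ℓ, (col P j - col M ℓ))‖
            ≤ Real.sqrt m * (4 * σ / sδ) := by
        intro ℓ _
        rw [norm_smul, norm_smul, Real.norm_eq_abs, Real.norm_eq_abs,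
          abs_of_nonneg (inv_nonneg.2 hsm0.le)]
        have hd : ‖∑ j ∈ S ℓ, (col P j - col M ℓ)‖ ≤ (m:ℝ) * (4 * σ / sδ) := by
          refine (norm_sum_le _ _).trans ?_
          calc ∑ j ∈ S ℓ, ‖col P j - col M ℓ‖
              ≤ ∑ _j ∈ S ℓ, (4 * σ / sδ) := Finset.sum_le_sum (fun j hj => hSdist ℓ j hj)
            _ = (m:ℝ) * (4 * σ / sδ) := by
                rw [Finset.sum_const, hScard ℓ, nsmul_eq_mul]
        have h4 : 0 ≤ 4 * σ / sδ := by positivity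
        have h5 : (Real.sqrt m)⁻¹ * ‖∑ j ∈ S ℓ, (col P j - col M ℓ)‖
            ≤ Real.sqrt m * (4 * σ / sδ) := by
          calc (Real.sqrt m)⁻¹ * ‖∑ j ∈ S ℓ, (col P j - col M ℓ)‖
              ≤ (Real.sqrt m)⁻¹ * ((m:ℝ) * (4 * σ / sδ)) :=
                mul_le_mul_of_nonneg_left hd (inv_nonneg.2 hsm0.le)
            _ = Real.sqrt m * (4 * σ / sδ) := by rw [← mul_assoc, hsm]
        calc |c ℓ| * ((Real.sqrt m)⁻¹ * ‖∑ j ∈ S ℓ, (col P j - col M ℓ)‖)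
            ≤ 1 * ((Real.sqrt m)⁻¹ * ‖∑ j ∈ S ℓ, (col P j - col M ℓ)‖) :=
              mul_le_mul_of_nonneg_right (habs_le_one ℓ) (by positivity)
          _ = (Real.sqrt m)⁻¹ * ‖∑ j ∈ S ℓ, (col P j - col M ℓ)‖ := one_mul _
          _ ≤ _ := h5
      calc ∑ ℓ, ‖c ℓ • ((Real.sqrt m)⁻¹ • ∑ j ∈ S ℓ, (col P j - col M ℓ))‖
          ≤ ∑ _ℓ : Fin k, Real.sqrt m * (4 * σ / sδ) := Finset.sum_le_sum hterm
        _ = K * (Real.sqrt m * (4 * σ / sδ)) := by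
            rw [Finset.sum_const, Finset.card_univ, Fintype.card_fin, nsmul_eq_mul, ← hKdef]
    -- lower bound on the M-combination
    have hMcomb : α * minM / Real.sqrt K ≤ ‖∑ ℓ, c ℓ • col M ℓ‖ := by
      refine le_trans ?_ (proj_lower_bound M c ℓs)
      have h1 : α * minM ≤ projNullNorm M ℓs (col M ℓs) :=
        le_trans (by nlinarith) (hWS ℓs)
      have h2 : 0 ≤ α * minM := by positivity
      calc α * minM / Real.sqrt K = (1 / Real.sqrt K) * (α * minM) := by ring
        _ ≤ |c ℓs| * projNullNorm M ℓs (col M ℓs) :=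
            mul_le_mul hcs h1 h2 (abs_nonneg _)
    -- triangle inequality
    have htri : Real.sqrt m * ‖∑ ℓ, c ℓ • col M ℓ‖ - ‖E‖ ≤ ‖L x‖ := by
      have h1 := norm_sub_norm_le (Real.sqrt m • (∑ ℓ, c ℓ • col M ℓ)) (-E)
      rw [sub_neg_eq_add, norm_neg, ← hLx, norm_smul, Real.norm_eq_abs,
        abs_of_nonneg hsm0.le] at h1
      exact h1
    -- put together and do arithmetic
    have hsmδn : Real.sqrt m = sδ * Real.sqrt n := by
      rw [hm, Real.sqrt_mul hδ0.le, hsδdef]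
    have hR : K ^ (8.5:ℝ) * Real.sqrt K = K ^ 9 := by
      rw [Real.sqrt_eq_rpow, ← Real.rpow_add hK0, ← Real.rpow_natCast K 9]
      norm_num
    have hKR : K ≤ K ^ (8.5:ℝ) := by
      nth_rewrite 1 [← Real.rpow_one K]
      exact Real.rpow_le_rpow_of_exponent_le hK1 (by norm_num)
    have hsn0 : 0 ≤ Real.sqrt n := Real.sqrt_nonneg n
    have hR0 : 0 < K ^ (8.5:ℝ) := Real.rpow_pos_of_pos hK0 _
    -- key1
    have key1 : 4500 * K ^ (8.5:ℝ) * Real.sqrt n * σ / α ^ 2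
        ≤ Real.sqrt m * (α * minM / Real.sqrt K) := by
      rw [hsmδn]
      have hgoal : sδ * Real.sqrt n * (α * minM / Real.sqrt K)
          = sδ * Real.sqrt n * (α * minM) / Real.sqrt K := by ring
      rw [hgoal, div_le_div_iff₀ (by positivity) hsK0]
      have h1 : σ / sδ * (4500 * K ^ 9) * (Real.sqrt n * sδ)
          ≤ α ^ 3 * minM * (Real.sqrt n * sδ) :=
        mul_le_mul_of_nonneg_right hSB' (by positivity)
      have h2 : σ / sδ * sδ = σ := div_mul_cancel₀ σ hsδ0.ne'
      calc 4500 * K ^ (8.5:ℝ) * Real.sqrt n * σ * Real.sqrt K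
          = σ / sδ * (4500 * K ^ 9) * (Real.sqrt n * sδ) := by
            rw [← hR]; field_simp
        _ ≤ α ^ 3 * minM * (Real.sqrt n * sδ) := h1
        _ = sδ * Real.sqrt n * (α * minM) * α ^ 2 := by ring
    -- key2
    have key2 : K * (Real.sqrt m * (4 * σ / sδ))
        ≤ 4 * K ^ (8.5:ℝ) * Real.sqrt n * σ / α ^ 2 := by
      have h1 : K * (Real.sqrt m * (4 * σ / sδ)) = 4 * K * Real.sqrt n * σ := by
        rw [hsmδn]; field_simp
      rw [h1, le_div_iff₀ (by positivity)]
      have hα2 : α ^ 2 ≤ 1 := pow_le_one₀ hα0.le hα1.le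
      have h2a : K * α ^ 2 ≤ K * 1 := mul_le_mul_of_nonneg_left hα2 hK0.le
      rw [mul_one] at h2a
      have h2 : K * α ^ 2 ≤ K ^ (8.5:ℝ) := h2a.trans hKR
      have hh := mul_le_mul_of_nonneg_right h2 (mul_nonneg hsn0 hσpos.le)
      linarith only [hh]
    have hfinal : 995 * K ^ (8.5:ℝ) * Real.sqrt n * σ / α ^ 2
        ≤ Real.sqrt m * (α * minM / Real.sqrt K) - K * (Real.sqrt m * (4 * σ / sδ)) := by
      have h3 : 0 ≤ K ^ (8.5:ℝ) * Real.sqrt n * σ / α ^ 2 := by positivity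
      have e1 : (4500:ℝ) * K ^ (8.5:ℝ) * Real.sqrt n * σ / α ^ 2
          = 4500 * (K ^ (8.5:ℝ) * Real.sqrt n * σ / α ^ 2) := by ring
      have e2 : (4:ℝ) * K ^ (8.5:ℝ) * Real.sqrt n * σ / α ^ 2
          = 4 * (K ^ (8.5:ℝ) * Real.sqrt n * σ / α ^ 2) := by ring
      have e3 : (995:ℝ) * K ^ (8.5:ℝ) * Real.sqrt n * σ / α ^ 2
          = 995 * (K ^ (8.5:ℝ) * Real.sqrt n * σ / α ^ 2) := by ring
      rw [e1] at key1
      rw [e2] at key2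
      rw [e3]
      linarith only [key1, key2, h3]
    have h4 : Real.sqrt m * (α * minM / Real.sqrt K) ≤ Real.sqrt m * ‖∑ ℓ, c ℓ • col M ℓ‖ :=
      mul_le_mul_of_nonneg_left hMcomb hsm0.le
    linarith only [hfinal, h4, hE, htri]
  -- plumbing: from the subspace bound to the singular value
  rw [singularValue]
  have hBdd : BddAbove (Set.range fun V : {V : Submodule ℝ (EuclideanSpace ℝ (Fin n)) //
      Module.finrank ℝ V = k} =>
      ⨅ x : {x : EuclideanSpace ℝ (Fin n) // x ∈ V.1 ∧ ‖x‖ = 1},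
        ‖Matrix.toEuclideanLin P x.1‖) := by
    refine ⟨‖LinearMap.toContinuousLinearMap L‖, ?_⟩
    rintro _ ⟨V, rfl⟩
    have hVne : V.1 ≠ ⊥ := by
      intro h
      have := V.2
      rw [h, finrank_bot] at this
      omega
    obtain ⟨v, hvV, hv0⟩ := Submodule.exists_mem_ne_zero_of_ne_bot hVne
    have hx1 : ‖(‖v‖⁻¹ : ℝ) • v‖ = 1 := norm_smul_inv_norm hv0
    refine ciInf_le_of_le ⟨0, ?_⟩ ⟨(‖v‖⁻¹ : ℝ) • v, Submodule.smul_mem _ _ hvV, hx1⟩ ?_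
    · rintro _ ⟨y, rfl⟩; exact norm_nonneg _
    · calc ‖Matrix.toEuclideanLin P ((‖v‖⁻¹ : ℝ) • v)‖
          = ‖LinearMap.toContinuousLinearMap L ((‖v‖⁻¹ : ℝ) • v)‖ := by rw [hLdef]; rfl
        _ ≤ ‖LinearMap.toContinuousLinearMap L‖ * ‖(‖v‖⁻¹ : ℝ) • v‖ :=
            (LinearMap.toContinuousLinearMap L).le_opNorm _
        _ = ‖LinearMap.toContinuousLinearMap L‖ := by rw [hx1, mul_one]
  refine le_ciSup_of_le hBdd ⟨V₀, hrank⟩ ?_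
  haveI hne : Nonempty {x : EuclideanSpace ℝ (Fin n) // x ∈ V₀ ∧ ‖x‖ = 1} :=
    ⟨⟨u ⟨0, hkpos⟩, Submodule.subset_span (Set.mem_range_self _), hu.1 _⟩⟩
  refine le_ciInf ?_
  rintro ⟨x, hxV, hx1⟩
  exact hmain x hxV hx1
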